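/- Fix δ > 0, and for each integer N ≥ 1 define f_N : [−2, ∞) → ℝ by f_N(x) = e^{N/2} N^{−(N+1)(1+δ/2)} (x+2)^{N+1} exp(−(x−1)²/(2N^{1+δ})). Then there exists a constant C > 0 such that for every N ≥ 1 and every x ≥ −2, f_N(x) ≤ C; that is, the maxima of the functions f_N form a bounded sequence. -/

import Mathlib

open Real

/-- The function `f_N(x) = e^{N/2} N^{-(N+1)(1+δ/2)} (x+2)^{N+1} e^{-(x-1)²/(2N^{1+δ})}`. -/
noncomputable def fN (δ : ℝ) (N : ℕ) (x : ℝ) : ℝ :=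
  Real.exp (N / 2) * (N : ℝ) ^ (-(((N : ℝ) + 1) * (1 + δ / 2))) * (x + 2) ^ (N + 1) *
    Real.exp (-((x - 1) ^ 2 / (2 * (N : ℝ) ^ ((1 : ℝ) + δ))))

lemma aux_log_bound (δ n t : ℝ) (hδ : 0 < δ) (hn : 1 ≤ n) (ht : 0 < t) :
    n / 2 + -((n + 1) * (1 + δ / 2)) * Real.log n + (n + 1) * Real.log t +
      -((t - 3) ^ 2 / (2 * n ^ ((1:ℝ) + δ))) ≤ 5 := by
  have hn0 : (0:ℝ) < n := by linarith
  obtain ⟨σ, hσdef⟩ : ∃ σ : ℝ, σ = n ^ ((1:ℝ) + δ) := ⟨_, rfl⟩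
  have hσ0 : 0 < σ := by rw [hσdef]; positivity
  have hnσ : n ≤ σ := by
    rw [hσdef]
    calc n = n ^ (1:ℝ) := (Real.rpow_one n).symm
    _ ≤ n ^ ((1:ℝ) + δ) := Real.rpow_le_rpow_of_exponent_le hn (by linarith)
  obtain ⟨M, hMdef⟩ : ∃ M : ℝ, M = n + 1 := ⟨_, rfl⟩
  have hM0 : (0:ℝ) < M := by rw [hMdef]; linarith
  obtain ⟨a, hadef⟩ : ∃ a : ℝ, a = Real.sqrt (M / σ) := ⟨_, rfl⟩
  have ha0 : 0 < a := by rw [hadef]; exact Real.sqrt_pos.mpr (by positivity)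
  have ha2 : a ^ 2 = M / σ := by rw [hadef]; exact Real.sq_sqrt (by positivity)
  have haσ : a ^ 2 * σ = M := by rw [ha2]; field_simp
  have ha2le : a ^ 2 ≤ 2 := by nlinarith [haσ, hnσ, hσ0, hn]
  have haleft : a ≤ 1.5 := by nlinarith [sq_nonneg (a - 1.5), ha2le]
  obtain ⟨s, hsdef⟩ : ∃ s : ℝ, s = Real.sqrt (M * σ) := ⟨_, rfl⟩
  have hs0 : 0 < s := by rw [hsdef]; exact Real.sqrt_pos.mpr (by positivity)
  have has : a * s = M := by
    rw [hadef, hsdef, ← Real.sqrt_mul (by positivity) (M * σ),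
      show M / σ * (M * σ) = M ^ 2 by field_simp]
    exact Real.sqrt_sq hM0.le
  have hlogs : Real.log s = (Real.log M + (1 + δ) * Real.log n) / 2 := by
    rw [hsdef, Real.log_sqrt (by positivity), Real.log_mul (ne_of_gt hM0) (ne_of_gt hσ0),
      hσdef, Real.log_rpow hn0]
  have h1 : Real.log t ≤ Real.log s + (t / s - 1) := by
    have h := Real.log_le_sub_one_of_pos (div_pos ht hs0)
    rw [Real.log_div (ne_of_gt ht) (ne_of_gt hs0)] at h
    linarith
  have hts : M * (t / s) = a * t := by
    rw [← has]; field_simp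
  have h1' : M * Real.log t ≤ M * Real.log s + a * t - M := by
    have h := mul_le_mul_of_nonneg_left h1 hM0.le
    have he : M * (Real.log s + (t / s - 1)) = M * Real.log s + M * (t/s) - M := by ring
    rw [he, hts] at h
    linarith
  have h1'' : M * Real.log s
      = M * Real.log M / 2 + M * Real.log n / 2 + δ * (M * Real.log n) / 2 := by
    rw [hlogs]; ring
  have h2 : a * t - (3 * a + M / 2) ≤ (t - 3) ^ 2 / (2 * σ) := by
    rw [le_div_iff₀ (by positivity)]
    have hMσ : M * σ = a ^ 2 * σ ^ 2 := by rw [← haσ]; ring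
    nlinarith [sq_nonneg (t - 3 - a * σ), hMσ]
  have h4 : Real.log M - Real.log n ≤ 1 / n := by
    have h := Real.log_le_sub_one_of_pos (div_pos hM0 hn0)
    rw [Real.log_div (ne_of_gt hM0) (ne_of_gt hn0)] at h
    have e : M / n - 1 = 1 / n := by rw [hMdef]; field_simp; ring
    linarith
  have h6 : M / 2 * (Real.log M - Real.log n) ≤ M / 2 * (1 / n) :=
    mul_le_mul_of_nonneg_left h4 (by positivity)
  have h5 : M / 2 * (1 / n) ≤ 1 := by
    rw [mul_one_div, div_le_one hn0, hMdef]; linarith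
  rw [← hσdef, ← hMdef]
  nlinarith [h1', h1'', h2, h6, h5, haleft, ha0, hMdef]

/-- The functions `f_N` are uniformly bounded on `[-2, ∞)`: their maxima form a bounded
sequence. -/
theorem stmt_13 (δ : ℝ) (hδ : 0 < δ) :
    ∃ C : ℝ, 0 < C ∧ ∀ N : ℕ, 1 ≤ N → ∀ x : ℝ, -2 ≤ x → fN δ N x ≤ C := by
  refine ⟨Real.exp 5, Real.exp_pos 5, fun N hN x hx => ?_⟩
  have hn1 : (1:ℝ) ≤ (N:ℝ) := by exact_mod_cast hN
  have hn0 : (0:ℝ) < (N:ℝ) := by linarith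
  rcases eq_or_lt_of_le (by linarith : (0:ℝ) ≤ x + 2) with h0 | ht
  · have hz : fN δ N x = 0 := by
      unfold fN
      rw [← h0]
      simp
    rw [hz]
    positivity
  · have hf0 : 0 < fN δ N x := by
      unfold fN
      exact mul_pos (mul_pos (mul_pos (Real.exp_pos _) (Real.rpow_pos_of_pos hn0 _))
        (pow_pos ht _)) (Real.exp_pos _)
    have hlog : Real.log (fN δ N x) ≤ 5 := by
      have e : Real.log (fN δ N x) =
          (N:ℝ) / 2 + -(((N:ℝ) + 1) * (1 + δ / 2)) * Real.log (N:ℝ)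
            + ((N:ℝ) + 1) * Real.log (x + 2)
            + -((x - 1) ^ 2 / (2 * (N:ℝ) ^ ((1:ℝ) + δ))) := by
        unfold fN
        rw [Real.log_mul (by positivity) (Real.exp_ne_zero _),
          Real.log_mul (mul_pos (Real.exp_pos _) (Real.rpow_pos_of_pos hn0 _)).ne'
            (pow_pos ht _).ne',
          Real.log_mul (Real.exp_ne_zero _) (Real.rpow_pos_of_pos hn0 _).ne',
          Real.log_exp, Real.log_exp, Real.log_pow, Real.log_rpow hn0]
        push_cast
        ring
      rw [e, show x - 1 = x + 2 - 3 from by ring]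
      exact aux_log_bound δ (N:ℝ) (x + 2) hδ hn1 ht
    calc fN δ N x = Real.exp (Real.log (fN δ N x)) := (Real.exp_log hf0).symm
      _ ≤ Real.exp 5 := Real.exp_le_exp.mpr hlog
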